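/- arXiv:1108.1161 — 2 statements merged into one kernel-verified Lean document; each statement's English description precedes it below -/
import Mathlib

section
/- Let 2 ≤ s ≤ r be integers. Every generic (r,s)-set A ⊆ F₂^r satisfies |A| ≥ 2^{s−1} + r − s; consequently F(r,s) ≥ 2^{s−1} + r − s. -/
/-- `A ⊆ F₂^r` is a *generic `(r,s)`-erasure correcting set* if for every `r × s` matrix `M`
over `F₂` of rank `s` there is `a ∈ A` such that the row vector `a·M` has Hamming weight `1`. -/
def IsGenericSet (r s : ℕ) (A : Set (Fin r → ZMod 2)) : Prop :=
  ∀ M : Matrix (Fin r) (Fin s) (ZMod 2), M.rank = s →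
    ∃ a ∈ A, hammingNorm (Matrix.vecMul a M) = 1

/-- `F(r,s)`: the minimum cardinality of a generic `(r,s)`-set. -/
noncomputable def Fgen (r s : ℕ) : ℕ :=
  sInf {n | ∃ A : Finset (Fin r → ZMod 2), IsGenericSet r s ↑A ∧ A.card = n}

/-- The standard bilinear form `⟨x,y⟩ = ∑ i, x i * y i` on `F₂^r`. -/
def bform {r : ℕ} (x y : Fin r → ZMod 2) : ZMod 2 := ∑ i, x i * y i

/-- `A ⊆ F₂^r` is an *(r,s)-set* if for every `s` linearly independent vectors `v₁, …, v_s`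
there is `c ∈ A` with `⟨c, v_j⟩ = 1` for all `j`. -/
def IsRSSet (r s : ℕ) (A : Set (Fin r → ZMod 2)) : Prop :=
  ∀ v : Fin s → (Fin r → ZMod 2), LinearIndependent (ZMod 2) v →
    ∃ c ∈ A, ∀ j, bform c (v j) = 1

/-- `G₁(r,s)`: the minimum cardinality of an `(r,s)`-set. -/
noncomputable def G1 (r s : ℕ) : ℕ :=
  sInf {n | ∃ A : Finset (Fin r → ZMod 2), IsRSSet r s ↑A ∧ A.card = n}

/-- `A ⊆ F₂^r` is an *(r,s)-good set* if for every `s` linearly independent vectors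
`v₁, …, v_s` and every `x ∈ F₂^s` there is `c ∈ A` with `⟨c, v_j⟩ = x j` for all `j`. -/
def IsGoodSet (r s : ℕ) (A : Set (Fin r → ZMod 2)) : Prop :=
  ∀ v : Fin s → (Fin r → ZMod 2), LinearIndependent (ZMod 2) v →
    ∀ x : Fin s → ZMod 2, ∃ c ∈ A, ∀ j, bform c (v j) = x j

/-- `G(r,s)`: the minimum cardinality of an `(r,s)`-good set. -/
noncomputable def Ggood (r s : ℕ) : ℕ :=
  sInf {n | ∃ A : Finset (Fin r → ZMod 2), IsGoodSet r s ↑A ∧ A.card = n}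

/-- A linear code `C ⊆ F₂^ι` is *s-wise intersecting* if every `s` linearly independent
codewords have a common coordinate where they are all nonzero. -/
def IsIntersectingCode {ι : Type*} (s : ℕ) (C : Submodule (ZMod 2) (ι → ZMod 2)) : Prop :=
  ∀ u : Fin s → (ι → ZMod 2), (∀ j, u j ∈ C) → LinearIndependent (ZMod 2) u →
    ∃ i, ∀ j, u j i ≠ 0

/-- `n(k,s)`: the minimum length `n` for which an `s`-wise intersecting `[n,k]` code exists. -/
noncomputable def minIntLen (k s : ℕ) : ℕ :=
  sInf {n | ∃ C : Submodule (ZMod 2) (Fin n → ZMod 2),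
    Module.finrank (ZMod 2) C = k ∧ IsIntersectingCode s C}

/-- The Gaussian binomial coefficient `[k choose s]₂` as a real number. -/
noncomputable def gaussBinom (k s : ℕ) : ℝ :=
  ∏ i ∈ Finset.range s, ((2:ℝ)^(k-i) - 1) / ((2:ℝ)^(s-i) - 1)

open Matrix Module


-- helper lemmas
lemma rank_eq_of_inj {n s : ℕ} (M : Matrix (Fin n) (Fin s) (ZMod 2))
    (h : Function.Injective M.mulVecLin) : M.rank = s := by
  rw [Matrix.rank, LinearMap.finrank_range_of_inj h, Module.finrank_fin_fun]

lemma inj_of_rank {n s : ℕ} (M : Matrix (Fin n) (Fin s) (ZMod 2)) (h : M.rank = s) :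
    Function.Injective M.mulVecLin := by
  rw [← LinearMap.ker_eq_bot]
  have h2 := LinearMap.finrank_range_add_finrank_ker M.mulVecLin
  rw [Matrix.rank] at h
  rw [Module.finrank_fin_fun, h] at h2
  have : finrank (ZMod 2) (LinearMap.ker M.mulVecLin) = 0 := by omega
  exact Submodule.finrank_eq_zero.mp this

lemma rank_of_li {n s : ℕ} (v : Fin s → (Fin n → ZMod 2))
    (hv : LinearIndependent (ZMod 2) v) :
    (Matrix.of fun i j => v j i).rank = s := by
  have ht : (Matrix.of fun i j => v j i).col = v := rfl
  rw [Matrix.rank_eq_finrank_span_cols, ht, finrank_span_eq_card hv, Fintype.card_fin]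

lemma matrix_of_surj {n m : ℕ} (f : (Fin n → ZMod 2) →ₗ[ZMod 2] (Fin m → ZMod 2))
    (hf : Function.Surjective f) :
    ∃ P : Matrix (Fin n) (Fin m) (ZMod 2),
      (∀ a, Matrix.vecMul a P = f a) ∧
      ∀ s : ℕ, ∀ M' : Matrix (Fin m) (Fin s) (ZMod 2), M'.rank = s → (P * M').rank = s := by
  refine ⟨(LinearMap.toMatrix' f)ᵀ, ?_, ?_⟩
  · intro a
    rw [Matrix.vecMul_transpose]
    rw [← Matrix.toLin'_apply, Matrix.toLin'_toMatrix']
  · intro s M' hM'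
    have hPinj : Function.Injective ((LinearMap.toMatrix' f)ᵀ).mulVecLin := by
      rw [← LinearMap.ker_eq_bot, LinearMap.ker_eq_bot']
      intro y hy
      have hy' : ∀ x, y ⬝ᵥ f x = 0 := by
        intro x
        have h1 : y ⬝ᵥ (LinearMap.toMatrix' f).mulVec x = Matrix.vecMul y (LinearMap.toMatrix' f) ⬝ᵥ x :=
          Matrix.dotProduct_mulVec y _ x
        have h2 : (LinearMap.toMatrix' f).mulVec x = f x := by
          rw [← Matrix.toLin'_apply, Matrix.toLin'_toMatrix']
        have h3 : Matrix.vecMul y (LinearMap.toMatrix' f) = 0 := by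
          rw [← Matrix.mulVec_transpose]
          exact hy
        rw [← h2, h1, h3, zero_dotProduct]
      funext k  -- show y = 0
      obtain ⟨x, hx⟩ := hf (Pi.single k 1)
      have := hy' x
      rw [hx, dotProduct_single, mul_one] at this
      exact this
    apply rank_eq_of_inj
    rw [Matrix.mulVecLin_mul]
    exact hPinj.comp (inj_of_rank M' hM')

lemma hamming_one {s : ℕ} (x : Fin s → ZMod 2) (h : hammingNorm x = 1) :
    ∃ j, x = Pi.single j 1 := by
  classical
  rw [hammingNorm, Finset.card_eq_one] at h
  obtain ⟨j, hj⟩ := h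
  refine ⟨j, funext fun i => ?_⟩
  by_cases hij : i = j
  · subst hij
    have : x i ≠ 0 := by
      have : i ∈ ({i} : Finset (Fin s)) := Finset.mem_singleton_self i
      rw [← hj, Finset.mem_filter] at this
      exact this.2
    rw [Pi.single_eq_same]
    revert this
    generalize x i = z
    revert z
    decide
  · have : x i = 0 := by
      by_contra hne
      have : i ∈ Finset.filter (fun i => x i ≠ 0) Finset.univ :=
        Finset.mem_filter.mpr ⟨Finset.mem_univ i, hne⟩
      rw [hj, Finset.mem_singleton] at this
      exact hij this
    rw [this, Pi.single_eq_of_ne hij]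

lemma hamming_single {s : ℕ} (j : Fin s) : hammingNorm (Pi.single j 1 : Fin s → ZMod 2) = 1 := by
  classical
  simp only [hammingNorm, ne_eq, Pi.single_apply, ite_eq_right_iff, one_ne_zero, imp_false,
    not_not, Decidable.not_not]
  rw [Finset.filter_eq', if_pos (Finset.mem_univ j), Finset.card_singleton]

lemma exists_proj {r : ℕ} (u : Fin (r+1) → ZMod 2) (hu : u ≠ 0) :
    ∃ f : (Fin (r+1) → ZMod 2) →ₗ[ZMod 2] (Fin r → ZMod 2),
      Function.Surjective f ∧ f u = 0 := by
  set W : Submodule (ZMod 2) (Fin (r+1) → ZMod 2) := Submodule.span (ZMod 2) {u} with hWdef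
  have hW : finrank (ZMod 2) W = 1 := finrank_span_singleton hu
  have hq : finrank (ZMod 2) ((Fin (r+1) → ZMod 2) ⧸ W) = r := by
    have h1 := Submodule.finrank_quotient_add_finrank W
    rw [hW, Module.finrank_fin_fun] at h1
    omega
  have e : ((Fin (r+1) → ZMod 2) ⧸ W) ≃ₗ[ZMod 2] (Fin r → ZMod 2) :=
    LinearEquiv.ofFinrankEq _ _ (by rw [hq, Module.finrank_fin_fun])
  refine ⟨e.toLinearMap ∘ₗ W.mkQ, e.surjective.comp (Submodule.mkQ_surjective W), ?_⟩
  have hm : W.mkQ u = 0 := (Submodule.Quotient.mk_eq_zero W).mpr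
    (Submodule.mem_span_singleton_self u)
  rw [LinearMap.comp_apply, hm, map_zero]

lemma base_case (s : ℕ) (hs : 1 ≤ s) (A : Finset (Fin s → ZMod 2))
    (hA : IsGenericSet s s ↑A) : 2 ^ (s-1) ≤ A.card := by
  classical
  have hspan : Submodule.span (ZMod 2) ((↑A)ᶜ : Set (Fin s → ZMod 2)) ≠ ⊤ := by
    intro htop
    obtain ⟨t, hts, hspan', hli⟩ :=
      exists_linearIndependent (ZMod 2) ((↑A)ᶜ : Set (Fin s → ZMod 2))
    rw [htop] at hspan'
    haveI : Fintype t := (Set.toFinite t).fintype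
    let b : Basis t (ZMod 2) (Fin s → ZMod 2) :=
      Basis.mk hli (by rw [Subtype.range_coe]; exact ge_of_eq hspan')
    have hcard : Fintype.card t = s := by
      have h1 := Module.finrank_eq_card_basis b
      rw [Module.finrank_fin_fun] at h1
      omega
    let e := Fintype.equivFinOfCardEq hcard
    let b' := b.reindex e
    obtain ⟨P, hP1, hP2⟩ := matrix_of_surj b'.equivFun.toLinearMap b'.equivFun.surjective
    have hrank : P.rank = s := by
      have h1 := hP2 s 1 (by rw [Matrix.rank_one, Fintype.card_fin])
      rwa [mul_one] at h1
    obtain ⟨a, haA, hnorm⟩ := hA P hrank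
    rw [hP1] at hnorm
    obtain ⟨j, hj⟩ := hamming_one _ hnorm
    have hab : a = b' j := by
      apply b'.equivFun.injective
      have h2 : b'.equivFun (b' j) = Pi.single j 1 := by
        funext i
        rw [b'.equivFun_self]
        rw [Pi.single_apply]
        simp [eq_comm]
      rw [h2, ← hj]
      rfl
    have hmem : (b' j : Fin s → ZMod 2) ∈ t := by
      have h3 : b' j = b (e.symm j) := b.reindex_apply e j
      rw [h3, Basis.mk_apply]
      exact (e.symm j).2
    have : a ∈ ((↑A)ᶜ : Set (Fin s → ZMod 2)) := hab ▸ hts hmem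
    exact this haA
  have hlt : finrank (ZMod 2) (Submodule.span (ZMod 2) ((↑A)ᶜ : Set (Fin s → ZMod 2))) < s := by
    have h1 := Submodule.finrank_lt (K := ZMod 2) (V := Fin s → ZMod 2)
      hspan
    rwa [Module.finrank_fin_fun] at h1
  set W := Submodule.span (ZMod 2) ((↑A)ᶜ : Set (Fin s → ZMod 2)) with hWdef
  have hcardW : Fintype.card W ≤ 2 ^ (s-1) := by
    rw [card_eq_pow_finrank (K := ZMod 2) (V := W), ZMod.card]
    exact Nat.pow_le_pow_right (by norm_num) (by omega)
  have hcompl : Aᶜ.card ≤ Fintype.card W := by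
    rw [← Fintype.card_coe]
    apply Fintype.card_le_of_injective
      (fun x : ↥(Aᶜ) => (⟨(x : Fin s → ZMod 2), Submodule.subset_span (by
        simpa using Finset.mem_compl.mp x.2)⟩ : W))
    intro x y hxy
    exact Subtype.ext (congrArg (fun z : W => (z : Fin s → ZMod 2)) hxy)
  have h2s : Fintype.card (Fin s → ZMod 2) = 2 ^ s := by
    rw [Fintype.card_fun, ZMod.card, Fintype.card_fin]
  have hc := Finset.card_compl A
  rw [h2s] at hc
  have hpow : 2 ^ (s-1) * 2 = 2 ^ s := by
    rw [← pow_succ]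
    congr 1
    omega
  omega

lemma two_le_card {n s : ℕ} (hs : 1 ≤ s) (hsn : s < n) (A : Finset (Fin n → ZMod 2))
    (hA : IsGenericSet n s ↑A) : 2 ≤ A.card := by
  classical
  have hM0 : (Matrix.of fun i j => (Pi.basisFun (ZMod 2) (Fin n)) (Fin.castLE hsn.le j) i).rank
      = s :=
    rank_of_li _ ((Pi.basisFun (ZMod 2) (Fin n)).linearIndependent.comp _
      (Fin.castLE_injective hsn.le))
  obtain ⟨a0, ha0, _⟩ := hA _ hM0
  by_contra hlt
  push_neg at hlt
  have hsub : ∀ a ∈ A, a = a0 := fun a ha =>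
    Finset.card_le_one.mp (by omega) a ha a0 ha0
  by_cases h0 : a0 = 0
  · obtain ⟨a, ha, hn⟩ := hA _ hM0
    rw [hsub a ha, h0, Matrix.zero_vecMul, hammingNorm_zero] at hn
    exact absurd hn (by norm_num)
  · let φ : (Fin n → ZMod 2) →ₗ[ZMod 2] ZMod 2 :=
      { toFun := fun x => dotProduct a0 x
        map_add' := fun x y => dotProduct_add a0 x y
        map_smul' := fun c x => by simp [dotProduct_smul] }
    have hφker : finrank (ZMod 2) (LinearMap.ker φ) = n - 1 := by
      have h1 := LinearMap.finrank_range_add_finrank_ker φ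
      have h2 : finrank (ZMod 2) (LinearMap.range φ) = 1 := by
        have hle : finrank (ZMod 2) (LinearMap.range φ) ≤ 1 := by
          have := Submodule.finrank_le (LinearMap.range φ)
          rwa [Module.finrank_self] at this
        have hne : finrank (ZMod 2) (LinearMap.range φ) ≠ 0 := by
          rw [Ne, Submodule.finrank_eq_zero]
          obtain ⟨i0, hi0⟩ := Function.ne_iff.mp h0
          intro hbot
          have hmem : φ (Pi.single i0 1) ∈ LinearMap.range φ := LinearMap.mem_range_self φ _
          rw [hbot, Submodule.mem_bot] at hmem
          have : φ (Pi.single i0 1) = a0 i0 := by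
            show dotProduct a0 (Pi.single i0 1) = a0 i0
            rw [dotProduct_single, mul_one]
          rw [this] at hmem
          exact hi0 hmem
        omega
      rw [Module.finrank_fin_fun, h2] at h1
      omega
    have hsK : s ≤ finrank (ZMod 2) (LinearMap.ker φ) := by omega
    let bK := Module.finBasis (ZMod 2) (LinearMap.ker φ)
    let v1 : Fin s → (Fin n → ZMod 2) := fun j => ((bK (Fin.castLE hsK j)) : Fin n → ZMod 2)
    have hli : LinearIndependent (ZMod 2) v1 := by
      have h1 : LinearIndependent (ZMod 2) (fun j : Fin s => bK (Fin.castLE hsK j)) :=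
        bK.linearIndependent.comp _ (Fin.castLE_injective hsK)
      exact h1.map' (LinearMap.ker φ).subtype (Submodule.ker_subtype _)
    obtain ⟨a, ha, hn⟩ := hA _ (rank_of_li v1 hli)
    rw [hsub a ha] at hn
    have hz : Matrix.vecMul a0 (Matrix.of fun i j => v1 j i) = 0 := by
      funext j
      have hmem : v1 j ∈ LinearMap.ker φ := (bK (Fin.castLE hsK j)).2
      have hφ0 : dotProduct a0 (v1 j) = 0 := LinearMap.mem_ker.mp hmem
      show Matrix.vecMul a0 (Matrix.of fun i j => v1 j i) j = (0 : Fin s → ZMod 2) j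
      simpa [Matrix.vecMul, dotProduct, mul_comm] using hφ0
    rw [hz, hammingNorm_zero] at hn
    exact absurd hn (by norm_num)

lemma step_case {r s : ℕ} (hs : 1 ≤ s) (hsr : s ≤ r) (A : Finset (Fin (r+1) → ZMod 2))
    (hA : IsGenericSet (r+1) s ↑A)
    (IH : ∀ B : Finset (Fin r → ZMod 2), IsGenericSet r s ↑B → 2 ^ (s-1) + r - s ≤ B.card) :
    2 ^ (s-1) + (r+1) - s ≤ A.card := by
  classical
  obtain ⟨a0, ha0, a1, ha1, hne⟩ :=
    Finset.one_lt_card.mp (two_le_card hs (by omega) A hA)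
  have hu : a0 - a1 ≠ 0 := sub_ne_zero.mpr hne
  obtain ⟨f, hfs, hfu⟩ := exists_proj (a0 - a1) hu
  obtain ⟨P, hP1, hP2⟩ := matrix_of_surj f hfs
  have hf01 : f a0 = f a1 := by
    have h1 : f a0 - f a1 = 0 := by rw [← map_sub]; exact hfu
    exact sub_eq_zero.mp h1
  have hB : IsGenericSet r s ↑(A.image (fun a => f a)) := by
    intro M' hM'
    obtain ⟨a, ha, hn⟩ := hA (P * M') (hP2 s M' hM')
    refine ⟨f a, Finset.mem_coe.mpr (Finset.mem_image_of_mem _ ha), ?_⟩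
    rw [← Matrix.vecMul_vecMul, hP1] at hn
    exact hn
  have hcards : (A.image (fun a => f a)).card ≤ A.card - 1 := by
    have himg : A.image (fun a => f a) ⊆ (A.erase a1).image (fun a => f a) := by
      intro x hx
      obtain ⟨a, haA, hax⟩ := Finset.mem_image.mp hx
      by_cases h : a = a1
      · subst h
        exact Finset.mem_image.mpr ⟨a0, Finset.mem_erase.mpr ⟨hne, ha0⟩, by rw [hf01, hax]⟩
      · exact Finset.mem_image.mpr ⟨a, Finset.mem_erase.mpr ⟨h, haA⟩, hax⟩
    calc (A.image (fun a => f a)).card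
        ≤ ((A.erase a1).image (fun a => f a)).card := Finset.card_le_card himg
      _ ≤ (A.erase a1).card := Finset.card_image_le
      _ = A.card - 1 := by rw [Finset.card_erase_of_mem ha1]
  have hIH := IH _ hB
  have h2 : 2 ≤ A.card := two_le_card hs (by omega) A hA
  obtain ⟨x, hx⟩ : ∃ x, 2 ^ (s-1) = x := ⟨_, rfl⟩
  rw [hx] at hIH ⊢
  omega

lemma univ_generic (r s : ℕ) (hs : 1 ≤ s) (hsr : s ≤ r) :
    IsGenericSet r s ↑(Finset.univ : Finset (Fin r → ZMod 2)) := by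
  intro M hM
  have hr : Mᵀ.rank = s := by rw [Matrix.rank_transpose]; exact hM
  have hsurj : Function.Surjective Mᵀ.mulVecLin := by
    rw [← LinearMap.range_eq_top]
    apply Submodule.eq_top_of_finrank_eq
    have h1 : finrank (ZMod 2) (LinearMap.range Mᵀ.mulVecLin) = s := hr
    rw [h1, Module.finrank_fin_fun]
  obtain ⟨a, ha⟩ := hsurj (Pi.single (⟨0, hs⟩ : Fin s) 1)
  refine ⟨a, by simp, ?_⟩
  have hv : Matrix.vecMul a M = Pi.single (⟨0, hs⟩ : Fin s) 1 := by
    rw [← Matrix.mulVec_transpose]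
    exact ha
  rw [hv]
  exact hamming_single _


/-- Every generic `(r,s)`-set has size at least `2^(s-1) + r - s`; consequently
`F(r,s) ≥ 2^(s-1) + r - s`. -/
theorem statement4 (r s : ℕ) (hs : 2 ≤ s) (hsr : s ≤ r) :
    (∀ A : Finset (Fin r → ZMod 2), IsGenericSet r s ↑A → 2 ^ (s - 1) + r - s ≤ A.card) ∧
    2 ^ (s - 1) + r - s ≤ Fgen r s := by
  have main : ∀ n, s ≤ n → ∀ A : Finset (Fin n → ZMod 2),
      IsGenericSet n s ↑A → 2 ^ (s - 1) + n - s ≤ A.card := by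
    intro n hn
    induction n, hn using Nat.le_induction with
    | base =>
      intro A hA
      have h1 := base_case s (by omega) A hA
      obtain ⟨x, hx⟩ : ∃ x, 2 ^ (s-1) = x := ⟨_, rfl⟩
      rw [hx] at h1 ⊢
      omega
    | succ n hn ih =>
      intro A hA
      exact step_case (by omega) hn A hA ih
  refine ⟨main r hsr, ?_⟩
  have hne : {n | ∃ A : Finset (Fin r → ZMod 2), IsGenericSet r s ↑A ∧ A.card = n}.Nonempty :=
    ⟨_, ⟨Finset.univ, univ_generic r s (by omega) hsr, rfl⟩⟩
  have hmem := Nat.sInf_mem hne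
  obtain ⟨A, hA, hcard⟩ := hmem
  have h1 := main r hsr A hA
  rw [hcard] at h1
  exact h1
end

section
/- Let 2 ≤ s < k be integers and let N be a positive integer with N ≤ 2^k − 1. If ∏_{j=1}^{N} (1 − s·2^{k−s}/(2^k − j)) · (1/s!)·∏_{i=0}^{s−1} (2^s − 2^i) · [k choose s]₂ < 1, then F(k,s) ≤ N, i.e., there exists a generic (k,s)-set of cardinality N. -/
section Aux

open Finset

variable {k s : ℕ}

open Finset

variable {k s : ℕ}

/-- linear map a ↦ (⟨a, v j⟩)_j -/
noncomputable def philin (v : Fin s → (Fin k → ZMod 2)) :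
    (Fin k → ZMod 2) →ₗ[ZMod 2] (Fin s → ZMod 2) :=
  (Matrix.of fun j i => v j i).mulVecLin

lemma philin_apply (v : Fin s → (Fin k → ZMod 2)) (a : Fin k → ZMod 2) (j : Fin s) :
    philin v a j = ∑ i, a i * v j i := by
  simp [philin, Matrix.mulVecLin, Matrix.mulVec, dotProduct, mul_comm]

lemma philin_surj (v : Fin s → (Fin k → ZMod 2)) (hv : LinearIndependent (ZMod 2) v) :
    Function.Surjective (philin v) := by
  have hrank : (Matrix.of fun j i => v j i : Matrix (Fin s) (Fin k) (ZMod 2)).rank = s := by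
    have := hv.rank_matrix (M := (Matrix.of fun j i => v j i))
    simpa using this
  rw [← LinearMap.range_eq_top]
  apply Submodule.eq_top_of_finrank_eq
  have : Module.finrank (ZMod 2) (LinearMap.range (philin v)) = s := hrank
  rw [this]
  simp [Module.finrank_fintype_fun_eq_card]

lemma finrank_ker (v : Fin s → (Fin k → ZMod 2)) (hv : LinearIndependent (ZMod 2) v)
    (hsk : s ≤ k) :
    Module.finrank (ZMod 2) (LinearMap.ker (philin v)) = k - s := by
  have h1 := LinearMap.finrank_range_add_finrank_ker (philin v)
  rw [LinearMap.range_eq_top.2 (philin_surj v hv)] at h1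
  simp [Module.finrank_fintype_fun_eq_card] at h1
  omega

lemma card_fiber (v : Fin s → (Fin k → ZMod 2)) (hv : LinearIndependent (ZMod 2) v)
    (hsk : s ≤ k) (y : Fin s → ZMod 2) :
    (univ.filter (fun a : Fin k → ZMod 2 => philin v a = y)).card = 2 ^ (k - s) := by
  obtain ⟨a₀, ha₀⟩ := philin_surj v hv y
  have e : {a : Fin k → ZMod 2 // philin v a = y} ≃ LinearMap.ker (philin v) :=
    { toFun := fun a => ⟨a.1 - a₀, by simp [LinearMap.mem_ker, map_sub, a.2, ha₀]⟩
      invFun := fun b => ⟨a₀ + b.1, by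
        have := b.2
        rw [LinearMap.mem_ker] at this
        simp [map_add, this, ha₀]⟩
      left_inv := fun a => by ext1; simp
      right_inv := fun b => by ext1; simp }
  have hcs : (univ.filter (fun a : Fin k → ZMod 2 => philin v a = y)).card
      = Fintype.card {a : Fin k → ZMod 2 // philin v a = y} := by
    rw [Fintype.card_subtype]
  classical
  letI : Fintype (LinearMap.ker (philin v)) := Fintype.ofFinite _
  rw [hcs, Fintype.card_congr e]
  rw [Module.card_eq_pow_finrank (K := ZMod 2) (V := LinearMap.ker (philin v)),
    finrank_ker v hv hsk, ZMod.card]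

lemma zmod2_ne_zero {a : ZMod 2} (h : a ≠ 0) : a = 1 := by revert h; revert a; decide

lemma card_weight_one :
    (univ.filter (fun y : Fin s → ZMod 2 => hammingNorm y = 1)).card = s := by
  classical
  have himg : (univ.filter (fun y : Fin s → ZMod 2 => hammingNorm y = 1))
      = univ.image (fun j : Fin s => Pi.single j (1 : ZMod 2)) := by
    ext y
    simp only [mem_filter, mem_univ, true_and, mem_image]
    constructor
    · intro hy
      unfold hammingNorm at hy
      obtain ⟨j, hj⟩ := Finset.card_eq_one.1 hy
      refine ⟨j, ?_⟩
      funext j'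
      by_cases hj' : j' = j
      · subst hj'
        have : j' ∈ ({j'} : Finset (Fin s)) := mem_singleton_self j'
        rw [← hj] at this
        simp only [mem_filter, mem_univ, true_and] at this
        simp [Pi.single_eq_same, zmod2_ne_zero this]
      · have : j' ∉ ({j} : Finset (Fin s)) := by simp [hj']
        rw [← hj] at this
        simp only [mem_filter, mem_univ, true_and, not_not] at this
        simp [Pi.single_eq_of_ne hj', this]
    · rintro ⟨j, rfl⟩
      unfold hammingNorm
      rw [Finset.card_eq_one]
      refine ⟨j, ?_⟩
      ext j'
      by_cases hj' : j' = j <;> simp [hj', Pi.single_eq_of_ne]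
  rw [himg, Finset.card_image_of_injective _ ?_, card_univ, Fintype.card_fin]
  intro a b hab
  by_contra hne
  have := congrFun hab a
  simp only [] at this
  simp [Pi.single_apply, hne] at this

lemma card_G (v : Fin s → (Fin k → ZMod 2)) (hv : LinearIndependent (ZMod 2) v)
    (hsk : s ≤ k) :
    (univ.filter (fun a : Fin k → ZMod 2 => hammingNorm (philin v a) = 1)).card
      = s * 2 ^ (k - s) := by
  classical
  rw [Finset.card_eq_sum_card_fiberwise
    (f := philin v) (s := univ.filter (fun a : Fin k → ZMod 2 => hammingNorm (philin v a) = 1)) (t := univ.filter (fun y : Fin s → ZMod 2 => hammingNorm y = 1))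
    (fun a ha => by simp only [mem_coe, mem_filter, mem_univ, true_and] at ha ⊢; exact ha)]
  have : ∀ y ∈ univ.filter (fun y : Fin s → ZMod 2 => hammingNorm y = 1),
      ((univ.filter (fun a : Fin k → ZMod 2 => hammingNorm (philin v a) = 1)).filter
        (fun a => philin v a = y)).card = 2 ^ (k - s) := by
    intro y hy
    simp only [mem_filter, mem_univ, true_and] at hy
    rw [← card_fiber v hv hsk y]
    congr 1
    ext a
    simp only [mem_filter, mem_univ, true_and]
    constructor
    · tauto
    · intro h; rw [h]; exact ⟨hy, rfl⟩
  rw [Finset.sum_congr rfl this, Finset.sum_const, card_weight_one, smul_eq_mul]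

noncomputable def tupOf (s : ℕ) {k : ℕ} (T : Finset (Fin k → ZMod 2)) :
    Fin s → (Fin k → ZMod 2) :=
  if h : Fintype.card {x : Fin k → ZMod 2 // x ∈ T} = s then
    fun i => ((Fintype.equivFinOfCardEq h).symm i : {x // x ∈ T}).1
  else 0

def isGoodT (k s : ℕ) (T : Finset (Fin k → ZMod 2)) : Prop :=
  T.card = s ∧ LinearIndependent (ZMod 2) (tupOf s T)

lemma tupOf_basic {k : ℕ} {T : Finset (Fin k → ZMod 2)} (hc : T.card = s) :
    Function.Injective (tupOf s T) ∧ (univ.image (tupOf s T) = T) := by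
  classical
  have hcard : Fintype.card {x : Fin k → ZMod 2 // x ∈ T} = s := by
    rw [Fintype.card_coe]; exact hc
  have htup : tupOf s T = fun i => ((Fintype.equivFinOfCardEq hcard).symm i : {x // x ∈ T}).1 := by
    rw [tupOf, dif_pos hcard]
  refine ⟨?_, ?_⟩
  · rw [htup]
    exact Subtype.val_injective.comp (Fintype.equivFinOfCardEq hcard).symm.injective
  · rw [htup]
    ext x
    simp only [mem_image, mem_univ, true_and]
    constructor
    · rintro ⟨i, rfl⟩; exact ((Fintype.equivFinOfCardEq hcard).symm i).2
    · intro hx; exact ⟨Fintype.equivFinOfCardEq hcard ⟨x, hx⟩, by simp⟩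

lemma card_goodT_le (hsk : s ≤ k) [DecidablePred (isGoodT k s)] :
    (univ.filter (isGoodT k s)).card * Nat.factorial s ≤
      ∏ i ∈ range s, (2 ^ k - 2 ^ i) := by
  classical
  set 𝒯 := univ.filter (isGoodT k s) with h𝒯
  have hinj : Function.Injective
      (fun p : {T // T ∈ 𝒯} × Equiv.Perm (Fin s) =>
        (⟨tupOf s p.1.1 ∘ p.2, by
          have hT : isGoodT k s p.1.1 := by
            have := p.1.2
            simp only [h𝒯, mem_filter] at this; exact this.2
          exact hT.2.comp _ p.2.injective⟩ :
          {v : Fin s → Fin k → ZMod 2 // LinearIndependent (ZMod 2) v})) := by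
    rintro ⟨⟨T, hT⟩, σ⟩ ⟨⟨T', hT'⟩, σ'⟩ hp
    have hTg : isGoodT k s T := by rw [h𝒯, mem_filter] at hT; exact hT.2
    have hTg' : isGoodT k s T' := by rw [h𝒯, mem_filter] at hT'; exact hT'.2
    simp only [Subtype.mk_eq_mk] at hp
    have heq : tupOf s T ∘ σ = tupOf s T' ∘ σ' := hp
    have hTT : T = T' := by
      have h1 : univ.image (tupOf s T ∘ σ) = T := by
        rw [show univ.image (tupOf s T ∘ σ) = (univ.image σ).image (tupOf s T) from
          (Finset.image_image ..).symm, Finset.image_univ_equiv, (tupOf_basic hTg.1).2]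
      have h2 : univ.image (tupOf s T' ∘ σ') = T' := by
        rw [show univ.image (tupOf s T' ∘ σ') = (univ.image σ').image (tupOf s T') from
          (Finset.image_image ..).symm, Finset.image_univ_equiv, (tupOf_basic hTg'.1).2]
      rw [← h1, ← h2, heq]
    subst hTT
    have hσ : σ = σ' := by
      ext i : 1
      exact (tupOf_basic hTg.1).1 (congrFun heq i)
    simp [hσ]
  have hle := Fintype.card_le_of_injective _ hinj
  rw [Fintype.card_prod, Fintype.card_coe, Fintype.card_perm, Fintype.card_fin] at hle
  have hrhs : Fintype.card {v : Fin s → Fin k → ZMod 2 // LinearIndependent (ZMod 2) v}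
      = ∏ i ∈ range s, (2 ^ k - 2 ^ i) := by
    have hn : Module.finrank (ZMod 2) (Fin k → ZMod 2) = k := by
      simp [Module.finrank_fintype_fun_eq_card]
    have := card_linearIndependent (K := ZMod 2) (V := Fin k → ZMod 2)
      (k := s) (by rw [hn]; exact hsk)
    rw [Nat.card_eq_fintype_card] at this
    rw [this]
    simp only [ZMod.card, hn]
    exact Fin.prod_univ_eq_prod_range (fun i => 2 ^ k - 2 ^ i) s
  rw [← hrhs]
  exact hle

lemma prod_gauss_eq (hsk : s ≤ k) :
    (∏ i ∈ range s, ((2:ℝ) ^ s - (2:ℝ) ^ i)) * gaussBinom k s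
      = ∏ i ∈ range s, ((2:ℝ) ^ k - (2:ℝ) ^ i) := by
  rw [gaussBinom, ← Finset.prod_mul_distrib]
  refine Finset.prod_congr rfl ?_
  intro i hi
  rw [Finset.mem_range] at hi
  have h1 : (2:ℝ) ^ i * 2 ^ (s - i) = 2 ^ s := by
    rw [← pow_add]; congr 1; omega
  have h2 : (2:ℝ) ^ i * 2 ^ (k - i) = 2 ^ k := by
    rw [← pow_add]; congr 1; omega
  have h3 : (2:ℝ) ^ s * 2 ^ (k - i) = 2 ^ k * 2 ^ (s - i) := by
    linear_combination (2:ℝ) ^ (s - i) * h2 - 2 ^ (k - i) * h1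
  have hden : (2:ℝ) ^ (s - i) - 1 ≠ 0 := by
    have : (2:ℝ) ^ 1 ≤ 2 ^ (s - i) := by
      apply pow_le_pow_right₀ one_le_two; omega
    simp at this; nlinarith
  field_simp
  linear_combination h3 - h2 + h1

lemma prod_sub_cast (b : ℕ) : ∀ n : ℕ,
    ∏ i ∈ range n, ((b : ℝ) - (i : ℝ)) = (b.descFactorial n : ℝ)
  | 0 => by simp
  | (n + 1) => by
    rw [Finset.prod_range_succ, prod_sub_cast b n, Nat.descFactorial_succ, Nat.cast_mul]
    rcases le_or_gt n b with h | h
    · rw [Nat.cast_sub h]; ring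
    · rw [Nat.descFactorial_eq_zero_iff_lt.2 h]
      simp

lemma prod_Icc_shift (f : ℕ → ℝ) : ∀ N : ℕ, ∏ j ∈ Icc 1 N, f j = ∏ i ∈ range N, f (i + 1)
  | 0 => by simp
  | (N + 1) => by
    rw [Finset.prod_Icc_succ_top (by omega), prod_Icc_shift f N, Finset.prod_range_succ]

lemma prod_ratio (t g N : ℕ) (hg : g ≤ t) (hN : N ≤ t) :
    ∏ j ∈ Icc 1 N, (1 - (g : ℝ) / ((t : ℝ) + 1 - (j : ℝ)))
      = ((t - g).descFactorial N : ℝ) / (t.descFactorial N : ℝ) := by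
  rw [prod_Icc_shift]
  have hfac : ∀ i ∈ range N, (1 - (g : ℝ) / ((t : ℝ) + 1 - ((i : ℕ) + 1 : ℕ)))
      = (((t - g : ℕ) : ℝ) - (i : ℝ)) / ((t : ℝ) - (i : ℝ)) := by
    intro i hi
    rw [Finset.mem_range] at hi
    have hit : (i : ℝ) < (t : ℝ) := by exact_mod_cast lt_of_lt_of_le hi hN
    have hne : (t : ℝ) - (i : ℝ) ≠ 0 := by linarith
    have h1 : ((t : ℝ) + 1 - ((i : ℕ) + 1 : ℕ)) = (t : ℝ) - (i : ℝ) := by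
      push_cast; ring
    rw [h1, Nat.cast_sub hg]
    field_simp
    ring
  rw [Finset.prod_congr rfl hfac, Finset.prod_div_distrib, prod_sub_cast, prod_sub_cast]

lemma card_bad_emb {α : Type*} [Fintype α] [DecidableEq α] (N : ℕ)
    (S' G : Finset α) (hGS : G ⊆ S') :
    (univ.filter (fun f : Fin N ↪ {x : α // x ∈ S'} => ∀ i, (f i).1 ∉ G)).card
      = (S'.card - G.card).descFactorial N := by
  classical
  have e : {f : Fin N ↪ {x : α // x ∈ S'} // ∀ i, (f i).1 ∉ G}
      ≃ (Fin N ↪ {x : α // x ∈ S' \ G}) :=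
    { toFun := fun f => ⟨fun i => ⟨(f.1 i).1, mem_sdiff.2 ⟨(f.1 i).2, f.2 i⟩⟩, by
        intro i j hij
        simp only [Subtype.mk.injEq] at hij
        exact f.1.injective (Subtype.ext hij)⟩
      invFun := fun g => ⟨⟨fun i => ⟨(g i).1, (mem_sdiff.1 (g i).2).1⟩, by
        intro i j hij
        simp only [Subtype.mk.injEq] at hij
        exact g.injective (Subtype.ext hij)⟩, fun i => (mem_sdiff.1 (g i).2).2⟩
      left_inv := fun f => by ext i : 2; rfl
      right_inv := fun g => by ext i : 2; rfl }
  rw [← Fintype.card_subtype, Fintype.card_congr e, Fintype.card_embedding_eq,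
    Fintype.card_coe, Fintype.card_fin, card_sdiff_of_subset hGS]

lemma card_emb {α : Type*} [Fintype α] [DecidableEq α] (N : ℕ) (S' : Finset α) :
    Fintype.card (Fin N ↪ {x : α // x ∈ S'}) = (S'.card).descFactorial N := by
  rw [Fintype.card_embedding_eq, Fintype.card_coe, Fintype.card_fin]

lemma philin_eq_bform (v : Fin s → (Fin k → ZMod 2)) (a : Fin k → ZMod 2) :
    philin v a = fun j => bform a (v j) :=
  funext fun j => by rw [philin_apply]; rfl

lemma norm_count (v : Fin s → (Fin k → ZMod 2)) (hv : Function.Injective v)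
    (T : Finset (Fin k → ZMod 2)) (hvT : univ.image v = T) (a : Fin k → ZMod 2) :
    hammingNorm (fun j => bform a (v j)) = (T.filter (fun x => bform a x ≠ 0)).card := by
  classical
  have h1 : hammingNorm (fun j => bform a (v j))
      = (univ.filter (fun j => bform a (v j) ≠ 0)).card := by
    simp [hammingNorm, Finset.filter_congr_decidable]
  rw [h1, ← hvT, filter_image, card_image_of_injective _ hv]

lemma cols_indep (M : Matrix (Fin k) (Fin s) (ZMod 2)) (h : M.rank = s) :
    LinearIndependent (ZMod 2) (fun j : Fin s => (fun i => M i j : Fin k → ZMod 2)) := by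
  apply linearIndependent_iff_card_eq_finrank_span.2
  rw [Fintype.card_fin]
  have := M.rank_eq_finrank_span_cols
  rw [h] at this
  exact this

end Aux

open Finset in
/-- Probabilistic upper bound for `F(k,s)`: if
`∏_{j=1}^{N} (1 - s·2^(k-s)/(2^k - j)) · (1/s!)·∏_{i=0}^{s-1}(2^s - 2^i) · [k choose s]₂ < 1`
then there is a generic `(k,s)`-set of size `N`, so `F(k,s) ≤ N`. -/

theorem statement13 (k s N : ℕ) (hs : 2 ≤ s) (hsk : s < k) (hN : 1 ≤ N) (hN' : N ≤ 2 ^ k - 1)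
    (h : (∏ j ∈ Finset.Icc 1 N, (1 - (s:ℝ) * (2:ℝ) ^ (k - s) / ((2:ℝ) ^ k - (j:ℝ)))) *
      ((1 / (Nat.factorial s : ℝ)) * ∏ i ∈ Finset.range s, ((2:ℝ) ^ s - (2:ℝ) ^ i)) *
      gaussBinom k s < 1) :
    Fgen k s ≤ N ∧ ∃ A : Finset (Fin k → ZMod 2), IsGenericSet k s ↑A ∧ A.card = N := by
  classical
  set t := 2 ^ k - 1 with ht
  set g := s * 2 ^ (k - s) with hg
  have h2k : 1 ≤ 2 ^ k := Nat.one_le_two_pow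
  have hgt : g ≤ t := by
    have h1 : s < 2 ^ s := Nat.lt_two_pow_self
    have hpos : 0 < 2 ^ (k - s) := Nat.pow_pos (by norm_num)
    have h2 : s * 2 ^ (k - s) < 2 ^ s * 2 ^ (k - s) := (Nat.mul_lt_mul_right hpos).2 h1
    have h3 : 2 ^ s * 2 ^ (k - s) = 2 ^ k := by rw [← pow_add]; congr 1; omega
    omega
  have hNt : N ≤ t := hN'
  set 𝒯 : Finset (Finset (Fin k → ZMod 2)) := univ.filter (isGoodT k s) with h𝒯def
  -- numeric inequality
  have hTle : (𝒯.card : ℝ) * (Nat.factorial s : ℝ) ≤ ∏ i ∈ Finset.range s, ((2:ℝ)^k - 2^i) := by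
    have hle := card_goodT_le (k := k) (s := s) hsk.le
    have hcast : ((∏ i ∈ Finset.range s, (2^k - 2^i) : ℕ) : ℝ)
        = ∏ i ∈ Finset.range s, ((2:ℝ)^k - 2^i) := by
      rw [Nat.cast_prod]
      refine Finset.prod_congr rfl ?_
      intro i hi
      rw [Finset.mem_range] at hi
      rw [Nat.cast_sub (Nat.pow_le_pow_right (by norm_num) (by omega))]
      push_cast
      ring
    calc (𝒯.card : ℝ) * (Nat.factorial s : ℝ)
        = ((𝒯.card * Nat.factorial s : ℕ) : ℝ) := by push_cast; ring
      _ ≤ ((∏ i ∈ Finset.range s, (2^k - 2^i) : ℕ) : ℝ) := by exact_mod_cast hle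
      _ = _ := hcast
  have hfacpos : (0:ℝ) < (Nat.factorial s : ℝ) := by
    exact_mod_cast Nat.factorial_pos s
  have hconst : ((1 / (Nat.factorial s : ℝ)) * ∏ i ∈ Finset.range s, ((2:ℝ)^s - 2^i)) *
      gaussBinom k s
      = (∏ i ∈ Finset.range s, ((2:ℝ)^k - 2^i)) / (Nat.factorial s : ℝ) := by
    rw [mul_assoc, prod_gauss_eq hsk.le, one_div, inv_mul_eq_div]
  have hTle' : (𝒯.card : ℝ) ≤
      ((1 / (Nat.factorial s : ℝ)) * ∏ i ∈ Finset.range s, ((2:ℝ)^s - 2^i)) * gaussBinom k s := by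
    rw [hconst, le_div_iff₀ hfacpos]
    exact hTle
  have hprodeq : (∏ j ∈ Finset.Icc 1 N, (1 - (s:ℝ) * (2:ℝ) ^ (k - s) / ((2:ℝ) ^ k - (j:ℝ))))
      = ((t - g).descFactorial N : ℝ) / (t.descFactorial N : ℝ) := by
    rw [← prod_ratio t g N hgt hNt]
    refine Finset.prod_congr rfl ?_
    intro j hj
    have htr : (t:ℝ) + 1 = (2:ℝ)^k := by
      rw [ht]; push_cast [Nat.cast_sub h2k]; ring
    have hgr : (g:ℝ) = (s:ℝ) * 2^(k-s) := by rw [hg]; push_cast; ring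
    rw [← htr, hgr]
  have htdpos : 0 < t.descFactorial N := by
    rcases Nat.eq_zero_or_pos (t.descFactorial N) with h0 | h0
    · rw [Nat.descFactorial_eq_zero_iff_lt] at h0; omega
    · exact h0
  have htdposR : (0:ℝ) < (t.descFactorial N : ℝ) := by exact_mod_cast htdpos
  have hprodnonneg : (0:ℝ) ≤ ((t - g).descFactorial N : ℝ) / (t.descFactorial N : ℝ) := by
    positivity
  have hkey : ((t - g).descFactorial N : ℝ) / (t.descFactorial N : ℝ) * (𝒯.card : ℝ) < 1 := by
    calc ((t - g).descFactorial N : ℝ) / (t.descFactorial N : ℝ) * (𝒯.card : ℝ)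
        ≤ ((t - g).descFactorial N : ℝ) / (t.descFactorial N : ℝ) *
          (((1 / (Nat.factorial s : ℝ)) * ∏ i ∈ Finset.range s, ((2:ℝ)^s - 2^i)) *
            gaussBinom k s) := mul_le_mul_of_nonneg_left hTle' hprodnonneg
      _ < 1 := by rw [← hprodeq, ← mul_assoc]; exact h
  have hnat : 𝒯.card * (t - g).descFactorial N < t.descFactorial N := by
    rw [div_mul_eq_mul_div, div_lt_one htdposR] at hkey
    have : ((𝒯.card * (t - g).descFactorial N : ℕ) : ℝ) < ((t.descFactorial N : ℕ) : ℝ) := by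
      push_cast
      linarith [hkey]
    exact_mod_cast this
  -- combinatorial construction
  set S' : Finset (Fin k → ZMod 2) := univ.filter (fun x => x ≠ 0) with hS'def
  have hS'card : S'.card = t := by
    rw [hS'def, filter_ne', card_erase_of_mem (mem_univ _), card_univ, ht]
    congr 1
    rw [Fintype.card_fun, ZMod.card, Fintype.card_fin]
  set GT : Finset (Fin k → ZMod 2) → Finset (Fin k → ZMod 2) :=
    fun T => univ.filter (fun a => hammingNorm (philin (tupOf s T) a) = 1) with hGTdef
  have hGTsub : ∀ T, GT T ⊆ S' := by
    intro T a ha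
    rw [hGTdef] at ha
    simp only [mem_filter, mem_univ, true_and] at ha
    rw [hS'def]
    simp only [mem_filter, mem_univ, true_and]
    rintro rfl
    rw [map_zero] at ha
    rw [hammingNorm_zero] at ha
    exact one_ne_zero ha.symm
  have hGTcard : ∀ T ∈ 𝒯, (GT T).card = g := by
    intro T hT
    rw [h𝒯def, mem_filter] at hT
    exact card_G (tupOf s T) hT.2.2 hsk.le
  have hbadcard : ∀ T ∈ 𝒯,
      (univ.filter (fun f : Fin N ↪ {x : Fin k → ZMod 2 // x ∈ S'} =>
        ∀ i, (f i).1 ∉ GT T)).card = (t - g).descFactorial N := by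
    intro T hT
    rw [card_bad_emb N S' (GT T) (hGTsub T), hS'card, hGTcard T hT]
  set bad : Finset (Fin N ↪ {x : Fin k → ZMod 2 // x ∈ S'}) :=
    univ.filter (fun f => ∃ T ∈ 𝒯, ∀ i, (f i).1 ∉ GT T) with hbaddef
  have hbadsub : bad ⊆ 𝒯.biUnion
      (fun T => univ.filter (fun f : Fin N ↪ {x : Fin k → ZMod 2 // x ∈ S'} =>
        ∀ i, (f i).1 ∉ GT T)) := by
    intro f hf
    rw [hbaddef, mem_filter] at hf
    obtain ⟨-, T, hT, hfT⟩ := hf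
    exact mem_biUnion.2 ⟨T, hT, mem_filter.2 ⟨mem_univ _, hfT⟩⟩
  have hbadlt : bad.card < Fintype.card (Fin N ↪ {x : Fin k → ZMod 2 // x ∈ S'}) := by
    have h1 := card_le_card hbadsub
    have h2 := Finset.card_biUnion_le (s := 𝒯)
      (t := fun T => univ.filter (fun f : Fin N ↪ {x : Fin k → ZMod 2 // x ∈ S'} =>
        ∀ i, (f i).1 ∉ GT T))
    have h3 : (∑ T ∈ 𝒯, (univ.filter (fun f : Fin N ↪ {x : Fin k → ZMod 2 // x ∈ S'} =>
        ∀ i, (f i).1 ∉ GT T)).card) = 𝒯.card * (t - g).descFactorial N := by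
      rw [Finset.sum_congr rfl hbadcard, Finset.sum_const, smul_eq_mul]
    rw [card_emb N S', hS'card]
    omega
  obtain ⟨f, hf⟩ : ∃ f : Fin N ↪ {x : Fin k → ZMod 2 // x ∈ S'}, f ∉ bad := by
    by_contra hcon
    push_neg at hcon
    have : bad = univ := eq_univ_iff_forall.2 hcon
    rw [this, card_univ] at hbadlt
    exact lt_irrefl _ hbadlt
  have hf' : ∀ T ∈ 𝒯, ∃ i, (f i).1 ∈ GT T := by
    rw [hbaddef, mem_filter] at hf
    push_neg at hf
    intro T hT
    obtain ⟨i, hi⟩ := hf (mem_univ f) T hT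
    exact ⟨i, hi⟩
  set A : Finset (Fin k → ZMod 2) := univ.image (fun i => (f i).1) with hAdef
  have hfinj : Function.Injective (fun i : Fin N => ((f i).1 : Fin k → ZMod 2)) :=
    fun a b hab => f.injective (Subtype.ext hab)
  have hAcard : A.card = N := by
    rw [hAdef, card_image_of_injective _ hfinj, card_univ, Fintype.card_fin]
  have hgen : IsGenericSet k s ↑A := by
    intro M hrank
    have hw := cols_indep M hrank
    set w : Fin s → (Fin k → ZMod 2) := fun j => fun i => M i j with hwdef
    have hwinj : Function.Injective w := hw.injective
    set T : Finset (Fin k → ZMod 2) := univ.image w with hTdef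
    have hTcard : T.card = s := by
      rw [hTdef, card_image_of_injective _ hwinj, card_univ, Fintype.card_fin]
    obtain ⟨hinj, himg⟩ := tupOf_basic hTcard
    have hTgood : isGoodT k s T := by
      refine ⟨hTcard, ?_⟩
      have hmem : ∀ i : Fin s, ∃ j, w j = tupOf s T i := by
        intro i
        have hmem' : tupOf s T i ∈ T := by
          have hx := mem_image_of_mem (tupOf s T) (mem_univ i)
          rw [himg] at hx
          exact hx
        rw [hTdef, mem_image] at hmem'
        obtain ⟨j, -, hj⟩ := hmem'
        exact ⟨j, hj⟩
      choose σ hσ using hmem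
      have hσinj : Function.Injective σ := by
        intro i j hij
        apply hinj
        rw [← hσ i, ← hσ j, hij]
      have heq : tupOf s T = w ∘ σ := funext fun i => (hσ i).symm
      rw [heq]
      exact hw.comp σ hσinj
    have hT𝒯 : T ∈ 𝒯 := by rw [h𝒯def, mem_filter]; exact ⟨mem_univ _, hTgood⟩
    obtain ⟨i, hi⟩ := hf' T hT𝒯
    refine ⟨(f i).1, ?_, ?_⟩
    · rw [hAdef]
      exact mem_coe.2 (mem_image_of_mem _ (mem_univ i))
    · rw [hGTdef] at hi
      simp only [mem_filter, mem_univ, true_and] at hi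
      have e1 : hammingNorm (philin (tupOf s T) (f i).1)
          = (T.filter (fun x => bform (f i).1 x ≠ 0)).card := by
        rw [philin_eq_bform]
        exact norm_count _ hinj T himg _
      have e2 : hammingNorm (Matrix.vecMul ((f i).1) M)
          = (T.filter (fun x => bform (f i).1 x ≠ 0)).card := by
        have hvm : Matrix.vecMul ((f i).1) M = fun j => bform (f i).1 (w j) := by
          funext j
          simp [Matrix.vecMul, dotProduct, bform, hwdef]
        rw [hvm]
        exact norm_count w hwinj T hTdef.symm _
      rw [e2, ← e1, hi]
  exact ⟨Nat.sInf_le ⟨A, hgen, hAcard⟩, ⟨A, hgen, hAcard⟩⟩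
end
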